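/- Let (A,(p_l)) be a non-unital self-induced Fréchet algebra and let n ∈ ℕ. Then the unitization A# is (2n+1)-weakly amenable if and only if every continuous derivation D : A → A^(2n+1) for which there exists T ∈ A* with ⟨ab,T⟩ = ⟨a,D(b)⟩ + ⟨b,D(a)⟩ for all a,b ∈ A is inner; moreover, in this case necessarily T = 0 for every such derivation. -/

import Mathlib

noncomputable section

open Filter Topology

/-- A topological `ℂ`-module `X` equipped with left and right actions of `A`,
each acting by continuous linear maps on `X`.  This is the data underlying a
locally convex `A`-bimodule. -/
structure BiMod (A : Type) : Type 1 where
  X : Type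
  [ag : AddCommGroup X]
  [md : Module ℂ X]
  [ts : TopologicalSpace X]
  l : A → X →L[ℂ] X
  r : A → X →L[ℂ] X

attribute [instance] BiMod.ag BiMod.md BiMod.ts

namespace BiMod

variable {A : Type}

/-- The strong dual of a bimodule, with the canonical dual actions
`⟨a·f, x⟩ = ⟨f, x·a⟩` and `⟨f·a, x⟩ = ⟨f, a·x⟩`.  The dual carries the strong
topology (uniform convergence on von Neumann bounded sets), which is the default
topology on `X →L[ℂ] ℂ` in Mathlib. -/
def dual (M : BiMod A) : BiMod A where
  X := M.X →L[ℂ] ℂ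
  l a := ContinuousLinearMap.precomp ℂ (M.r a)
  r a := ContinuousLinearMap.precomp ℂ (M.l a)

/-- The `n`-th iterated strong dual of a bimodule (`iterDual M 0 = M`). -/
def iterDual (M : BiMod A) : ℕ → BiMod A
  | 0 => M
  | n + 1 => (M.iterDual n).dual

instance dualCSM (M : BiMod A) : ContinuousSMul ℂ (M.dual).X :=
  inferInstanceAs (ContinuousSMul ℂ (M.X →L[ℂ] ℂ))

/-- Evaluation (canonical) embedding of a bimodule into its double dual. -/
def evalEmbed (M : BiMod A) [ContinuousSMul ℂ M.X] (x : M.X) : M.dual.dual.X :=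
  show (M.X →L[ℂ] ℂ) →L[ℂ] ℂ from
    ⟨⟨⟨fun f => f x, fun _ _ => rfl⟩, fun _ _ => rfl⟩, continuous_eval_const x⟩

/-- `ContinuousSMul` holds at every level of the iterated dual. -/
def iterCSM (M : BiMod A) (h : ContinuousSMul ℂ M.X) :
    ∀ n, ContinuousSMul ℂ (M.iterDual n).X
  | 0 => h
  | n + 1 => inferInstanceAs (ContinuousSMul ℂ ((M.iterDual n).X →L[ℂ] ℂ))

/-- The canonical (iterated evaluation) embedding `M → M^(2n)`. -/
def iterEmbed (M : BiMod A) (h : ContinuousSMul ℂ M.X) :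
    ∀ n : ℕ, M.X → (M.iterDual (2 * n)).X
  | 0, x => x
  | n + 1, x =>
    haveI := M.iterCSM h (2 * n)
    (M.iterDual (2 * n)).evalEmbed (M.iterEmbed h n x)

/-- The pairing between the `(k+1)`-st dual and the `k`-th dual. -/
def pairApply (M : BiMod A) (k : ℕ) (F : (M.iterDual (k + 1)).X)
    (x : (M.iterDual k).X) : ℂ := (show (M.iterDual k).X →L[ℂ] ℂ from F) x

end BiMod

section Defs

variable (A : Type) [NonUnitalRing A] [Module ℂ A] [SMulCommClass ℂ A A] [IsScalarTower ℂ A A]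
  [TopologicalSpace A] [IsTopologicalAddGroup A] [ContinuousSMul ℂ A] [ContinuousMul A]

/-- A continuous derivation from `A` into a bimodule. -/
def IsContDerivation (M : BiMod A) (D : A →L[ℂ] M.X) : Prop :=
  ∀ a b : A, D (a * b) = M.l a (D b) + M.r b (D a)

/-- An inner derivation : `D a = a·x - x·a` for some `x`. -/
def IsInnerDerivation (M : BiMod A) (D : A →L[ℂ] M.X) : Prop :=
  ∃ x : M.X, ∀ a : A, D a = M.l a x - M.r a x

/-- `A` as a bimodule over itself, via left/right multiplication. -/
def selfBiMod : BiMod A where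
  X := A
  l a := ⟨LinearMap.mulLeft ℂ a, continuous_mul_left a⟩
  r a := ⟨LinearMap.mulRight ℂ a, continuous_mul_right a⟩

/-- `A` is `n`-weakly amenable if every continuous derivation from `A` into the
`n`-th iterated strong dual `A^(n)` (with the canonical module actions) is inner. -/
def NWeaklyAmenable (n : ℕ) : Prop :=
  ∀ D : A →L[ℂ] ((selfBiMod A).iterDual n).X,
    IsContDerivation A ((selfBiMod A).iterDual n) D →
      IsInnerDerivation A ((selfBiMod A).iterDual n) D

/-- A closed two-sided ideal `I` of `A` (a closed `ℂ`-subalgebra which absorbs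
multiplication on both sides) as an `A`-bimodule. -/
def idealBiMod (I : NonUnitalSubalgebra ℂ A)
    (hl : ∀ a : A, ∀ x ∈ I, a * x ∈ I) (hr : ∀ a : A, ∀ x ∈ I, x * a ∈ I) : BiMod A where
  X := ↥I
  l a := ⟨{ toFun := fun x => (⟨a * (x : A), hl a x x.2⟩ : ↥I)
            map_add' := fun x y => by ext; simp [mul_add]
            map_smul' := fun c x => by ext; simp [mul_smul_comm] },
          (Continuous.subtype_mk ((continuous_mul_left a).comp continuous_subtype_val) _)⟩
  r a := ⟨{ toFun := fun x => (⟨(x : A) * a, hr a x x.2⟩ : ↥I)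
            map_add' := fun x y => by ext; simp [add_mul]
            map_smul' := fun c x => by ext; simp [smul_mul_assoc] },
          (Continuous.subtype_mk ((continuous_mul_right a).comp continuous_subtype_val) _)⟩

/-- `A` is `n`-ideally amenable if for every closed two-sided ideal `I` of `A`,
every continuous derivation from `A` into `I^(n)` is inner. -/
def NIdeallyAmenable (n : ℕ) : Prop :=
  ∀ (I : NonUnitalSubalgebra ℂ A), IsClosed (I : Set A) →
    ∀ (hl : ∀ a : A, ∀ x ∈ I, a * x ∈ I) (hr : ∀ a : A, ∀ x ∈ I, x * a ∈ I),
      ∀ D : A →L[ℂ] ((idealBiMod A I hl hr).iterDual n).X,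
        IsContDerivation A ((idealBiMod A I hl hr).iterDual n) D →
          IsInnerDerivation A ((idealBiMod A I hl hr).iterDual n) D

/-- The topology of `A` is generated by an increasing sequence of submultiplicative
seminorms.  Together with completeness and Hausdorffness this says that `A` is a
Fréchet algebra. -/
def FrechetSeminorms : Prop :=
  ∃ p : SeminormFamily ℂ A ℕ, WithSeminorms p ∧ (∀ n, p n ≤ p (n + 1)) ∧
    ∀ (n : ℕ) (x y : A), p n (x * y) ≤ p n x * p n y

/-- `A` has an identity element. -/
def HasIdentity : Prop := ∃ e : A, ∀ a : A, e * a = a ∧ a * e = a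

end Defs

section Montel

variable (E : Type) [AddCommGroup E] [Module ℂ E] [TopologicalSpace E]

/-- A Montel space: a barrelled locally convex Hausdorff space in which every closed
(von Neumann) bounded subset is compact. -/
def IsMontelSpace : Prop :=
  LocallyConvexSpace ℝ E ∧ T2Space E ∧ BarrelledSpace ℂ E ∧
    ∀ s : Set E, IsClosed s → Bornology.IsVonNBounded ℂ s → IsCompact s

end Montel

section More

variable (A : Type) [NonUnitalRing A] [Module ℂ A] [SMulCommClass ℂ A A] [IsScalarTower ℂ A A]
  [TopologicalSpace A] [IsTopologicalAddGroup A] [ContinuousSMul ℂ A] [ContinuousMul A]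

/-- A bounded approximate identity: a bounded net `(e_i)` with `e_i * a → a` and
`a * e_i → a` for every `a`. -/
def HasBoundedApproxIdentity : Prop :=
  ∃ (ι : Type) (_ : Preorder ι) (_ : IsDirected ι (· ≤ ·)) (_ : Nonempty ι) (e : ι → A),
    Bornology.IsVonNBounded ℂ (Set.range e) ∧
      ∀ a : A, Tendsto (fun i => e i * a) atTop (𝓝 a) ∧
        Tendsto (fun i => a * e i) atTop (𝓝 a)

/-- `A` is essential: the linear span of products is dense. -/
def IsEssential : Prop :=
  Dense ((Submodule.span ℂ {x : A | ∃ a b : A, x = a * b} : Submodule ℂ A) : Set A)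

/-- `A` is self-induced: it is essential and every balanced bilinear functional
`φ` (i.e. `φ (a*c) b = φ a (c*b)`) is of the form `φ a b = f (a*b)` for some
continuous linear functional `f`. -/
def SelfInduced : Prop :=
  IsEssential A ∧
    ∀ φ : A →ₗ[ℂ] A →ₗ[ℂ] ℂ, (∀ a b c : A, φ (a * c) b = φ a (c * b)) →
      ∃ f : A →L[ℂ] ℂ, ∀ a b : A, φ a b = f (a * b)

/-- The data of `M : BiMod A` constitutes a genuine locally convex `A`-bimodule:
the actions satisfy the bimodule laws, are `ℂ`-bilinear, jointly continuous, and
`M.X` is locally convex. -/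
structure IsLCBimod (M : BiMod A) : Prop where
  lc : LocallyConvexSpace ℝ M.X
  l_mul : ∀ (a b : A) (x : M.X), M.l (a * b) x = M.l a (M.l b x)
  r_mul : ∀ (a b : A) (x : M.X), M.r (a * b) x = M.r b (M.r a x)
  l_add : ∀ (a b : A) (x : M.X), M.l (a + b) x = M.l a x + M.l b x
  r_add : ∀ (a b : A) (x : M.X), M.r (a + b) x = M.r a x + M.r b x
  l_smul : ∀ (c : ℂ) (a : A) (x : M.X), M.l (c • a) x = c • M.l a x
  r_smul : ∀ (c : ℂ) (a : A) (x : M.X), M.r (c • a) x = c • M.r a x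
  lr_comm : ∀ (a b : A) (x : M.X), M.l a (M.r b x) = M.r b (M.l a x)
  cont_l : Continuous fun q : A × M.X => M.l q.1 q.2
  cont_r : Continuous fun q : A × M.X => M.r q.1 q.2

/-- `A` is amenable: for every locally convex `A`-bimodule `X`, every continuous
derivation from `A` into the strong dual `X*` (with the canonical dual actions)
is inner. -/
def Amenable : Prop :=
  ∀ M : BiMod A, IsLCBimod A M →
    ∀ D : A →L[ℂ] M.dual.X, IsContDerivation A M.dual D → IsInnerDerivation A M.dual D

end More

section UnitizationInstances

variable (A : Type) [NonUnitalRing A] [Module ℂ A] [SMulCommClass ℂ A A] [IsScalarTower ℂ A A]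
  [TopologicalSpace A] [IsTopologicalAddGroup A] [ContinuousSMul ℂ A] [ContinuousMul A]

/-- The unitization `A# = ℂ ⊕ A` carries the product topology, which is the topology
generated by the seminorms `q_l (a, λ) = p_l a + |λ|`. -/
instance : TopologicalSpace (Unitization ℂ A) :=
  TopologicalSpace.induced Unitization.toProd (inferInstance : TopologicalSpace (ℂ × A))

instance : IsTopologicalAddGroup (Unitization ℂ A) where
  continuous_add := continuous_induced_rng.2 <| by
    show Continuous fun p : Unitization ℂ A × Unitization ℂ A => p.1.toProd + p.2.toProd
    exact (continuous_induced_dom.comp continuous_fst).add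
      (continuous_induced_dom.comp continuous_snd)
  continuous_neg := continuous_induced_rng.2 <| by
    show Continuous fun p : Unitization ℂ A => -p.toProd
    exact continuous_induced_dom.neg

instance : ContinuousSMul ℂ (Unitization ℂ A) where
  continuous_smul := continuous_induced_rng.2 <| by
    show Continuous fun p : ℂ × Unitization ℂ A => p.1 • p.2.toProd
    exact continuous_fst.smul (continuous_induced_dom.comp continuous_snd)

instance : ContinuousMul (Unitization ℂ A) where
  continuous_mul := continuous_induced_rng.2 <| by
    have h1 : Continuous fun p : Unitization ℂ A × Unitization ℂ A => p.1.toProd :=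
      continuous_induced_dom.comp continuous_fst
    have h2 : Continuous fun p : Unitization ℂ A × Unitization ℂ A => p.2.toProd :=
      continuous_induced_dom.comp continuous_snd
    show Continuous fun p : Unitization ℂ A × Unitization ℂ A =>
      ((p.1.toProd.1 * p.2.toProd.1, p.1.toProd.1 • p.2.toProd.2 + p.2.toProd.1 • p.1.toProd.2
        + p.1.toProd.2 * p.2.toProd.2) : ℂ × A)
    exact (h1.fst.mul h2.fst).prodMk
      (((h1.fst.smul h2.snd).add (h2.fst.smul h1.snd)).add (h1.snd.mul h2.snd))

end UnitizationInstances


/-- The compatibility condition `⟨ab, T⟩ = ⟨a, D b⟩ + ⟨b, D a⟩` between a derivation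
`D : A → A^(2n+1)` and a functional `T ∈ A*`, where `⟨·,·⟩` is the canonical pairing
of `A^(2n+1)` with `A^(2n)` and `A` is embedded canonically in `A^(2n)`. -/
def PairCondition (A : Type) [NonUnitalRing A] [Module ℂ A] [SMulCommClass ℂ A A]
    [IsScalarTower ℂ A A] [TopologicalSpace A] [IsTopologicalAddGroup A] [ContinuousSMul ℂ A]
    [ContinuousMul A] (n : ℕ)
    (D : A →L[ℂ] ((selfBiMod A).iterDual (2 * n + 1)).X) (T : A →L[ℂ] ℂ) : Prop :=
  ∀ a b : A, T (a * b) =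
      (selfBiMod A).pairApply (2 * n) (D b)
        ((selfBiMod A).iterEmbed (show ContinuousSMul ℂ (selfBiMod A).X from
          inferInstanceAs (ContinuousSMul ℂ A)) n a)
    + (selfBiMod A).pairApply (2 * n) (D a)
        ((selfBiMod A).iterEmbed (show ContinuousSMul ℂ (selfBiMod A).X from
          inferInstanceAs (ContinuousSMul ℂ A)) n b)



-- ===== auxiliary development for the proof =====

-- ====== auxiliary development ======

/-- Application coercion for iterated duals. -/
instance {A' : Type} (M : BiMod A') (k : ℕ) :
    CoeFun ((M.iterDual (k+1)).X) (fun _ => (M.iterDual k).X → ℂ) :=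
  ⟨fun F => M.pairApply k F⟩

def evalAt {X : Type} [AddCommGroup X] [Module ℂ X] [TopologicalSpace X]
    [ContinuousSMul ℂ X] (x : X) :
    (X →L[ℂ] ℂ) →L[ℂ] ℂ :=
  ⟨⟨⟨fun f => f x, fun _ _ => rfl⟩, fun _ _ => rfl⟩, continuous_eval_const x⟩

lemma pA_add {A' : Type} (M : BiMod A') (k : ℕ) (F : (M.iterDual (k+1)).X)
    (x y : (M.iterDual k).X) :
    M.pairApply k F (x + y) = M.pairApply k F x + M.pairApply k F y :=
  map_add (show (M.iterDual k).X →L[ℂ] ℂ from F) x y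

lemma pA_smul {A' : Type} (M : BiMod A') (k : ℕ) (F : (M.iterDual (k+1)).X)
    (c : ℂ) (x : (M.iterDual k).X) :
    M.pairApply k F (c • x) = c • M.pairApply k F x :=
  map_smul (show (M.iterDual k).X →L[ℂ] ℂ from F) c x

lemma pA_zero {A' : Type} (M : BiMod A') (k : ℕ) (F : (M.iterDual (k+1)).X) :
    M.pairApply k F 0 = 0 :=
  map_zero (show (M.iterDual k).X →L[ℂ] ℂ from F)

section Aux
variable (A : Type) [NonUnitalRing A] [Module ℂ A] [SMulCommClass ℂ A A] [IsScalarTower ℂ A A]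
  [TopologicalSpace A] [IsTopologicalAddGroup A] [ContinuousSMul ℂ A] [ContinuousMul A]

local notation "𝕌" => Unitization ℂ A

def inrCLM : A →L[ℂ] 𝕌 :=
  ⟨⟨⟨fun a => (a : 𝕌), fun _ _ => by ext <;> simp⟩, fun _ _ => by ext <;> simp⟩,
    continuous_induced_rng.2 (continuous_const.prodMk continuous_id)⟩
def sndCLM : 𝕌 →L[ℂ] A :=
  ⟨⟨⟨fun u => u.snd, fun _ _ => rfl⟩, fun _ _ => rfl⟩,
    continuous_snd.comp continuous_induced_dom⟩
def fstCLM : 𝕌 →L[ℂ] ℂ :=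
  ⟨⟨⟨fun u => u.fst, fun _ _ => rfl⟩, fun _ _ => rfl⟩,
    continuous_fst.comp continuous_induced_dom⟩
def inlCLM : ℂ →L[ℂ] 𝕌 :=
  ⟨⟨⟨fun c => Unitization.inl c, fun _ _ => by ext <;> simp⟩, fun _ _ => by ext <;> simp⟩,
    continuous_induced_rng.2 (continuous_id.prodMk continuous_const)⟩

def split : ∀ k : ℕ,
    (((selfBiMod 𝕌).iterDual k).X →L[ℂ] ((selfBiMod A).iterDual k).X) ×
    (((selfBiMod A).iterDual k).X →L[ℂ] ((selfBiMod 𝕌).iterDual k).X) ×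
    (((selfBiMod 𝕌).iterDual k).X →L[ℂ] ℂ) ×
    (ℂ →L[ℂ] ((selfBiMod 𝕌).iterDual k).X)
  | 0 => (sndCLM A, inrCLM A, fstCLM A, inlCLM A)
  | k + 1 =>
    haveI := (selfBiMod (Unitization ℂ A)).iterCSM
      (inferInstanceAs (ContinuousSMul ℂ (Unitization ℂ A))) k
    haveI := (selfBiMod (Unitization ℂ A)).iterCSM
      (inferInstanceAs (ContinuousSMul ℂ (Unitization ℂ A))) (k+1)
    (ContinuousLinearMap.precomp ℂ (split k).2.1,
     ContinuousLinearMap.precomp ℂ (split k).1,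
     evalAt (X := ((selfBiMod 𝕌).iterDual k).X) ((split k).2.2.2 1),
     ContinuousLinearMap.toSpanSingleton ℂ (split k).2.2.1)

def ρk (k : ℕ) : ((selfBiMod 𝕌).iterDual k).X →L[ℂ] ((selfBiMod A).iterDual k).X := (split A k).1
def σk (k : ℕ) : ((selfBiMod A).iterDual k).X →L[ℂ] ((selfBiMod 𝕌).iterDual k).X := (split A k).2.1
def δk (k : ℕ) : ((selfBiMod 𝕌).iterDual k).X →L[ℂ] ℂ := (split A k).2.2.1
def ck (k : ℕ) : ℂ →L[ℂ] ((selfBiMod 𝕌).iterDual k).X := (split A k).2.2.2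

lemma rho_succ_apply (k : ℕ) (F : ((selfBiMod 𝕌).iterDual (k+1)).X)
    (g : ((selfBiMod A).iterDual k).X) :
    (ρk A (k+1) F : ((selfBiMod A).iterDual (k+1)).X) g = F (σk A k g) := rfl
lemma sigma_succ_apply (k : ℕ) (f : ((selfBiMod A).iterDual (k+1)).X)
    (x : ((selfBiMod 𝕌).iterDual k).X) :
    (σk A (k+1) f : ((selfBiMod 𝕌).iterDual (k+1)).X) x = f (ρk A k x) := rfl
lemma delta_succ_apply (k : ℕ) (F : ((selfBiMod 𝕌).iterDual (k+1)).X) :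
    δk A (k+1) F = F (ck A k 1) := rfl
lemma c_succ_apply (k : ℕ) (c : ℂ) (x : ((selfBiMod 𝕌).iterDual k).X) :
    (ck A (k+1) c : ((selfBiMod 𝕌).iterDual (k+1)).X) x = c * δk A k x := rfl

lemma rho_sigma (k : ℕ) (f : ((selfBiMod A).iterDual k).X) : ρk A k (σk A k f) = f := by
  induction k with
  | zero => rfl
  | succ k ih =>
    refine ContinuousLinearMap.ext fun g => ?_
    show f (ρk A k (σk A k g)) = (f : ((selfBiMod A).iterDual k).X → ℂ) g
    rw [ih]

lemma split_decomp : ∀ (k : ℕ) (x : ((selfBiMod 𝕌).iterDual k).X),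
    σk A k (ρk A k x) + ck A k (δk A k x) = x := by
  intro k
  induction k with
  | zero =>
    intro x
    refine Unitization.ext ?_ ?_
    · show (0 : ℂ) + x.fst = x.fst
      exact zero_add _
    · show x.snd + 0 = x.snd
      exact add_zero _
  | succ k ih =>
    intro F
    refine ContinuousLinearMap.ext fun x => ?_
    show (selfBiMod 𝕌).pairApply k F (σk A k (ρk A k x)) + δk A (k+1) F * δk A k x =
      (selfBiMod 𝕌).pairApply k F x
    simp only [delta_succ_apply]
    have hc : ck A k (δk A k x) = (δk A k x) • ck A k 1 := by
      rw [← map_smul, smul_eq_mul, mul_one]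
    rw [mul_comm, ← smul_eq_mul, ← pA_smul, ← hc, ← pA_add, ih x]

lemma rho_c_delta_sigma : ∀ k : ℕ, (∀ c : ℂ, ρk A k (ck A k c) = 0) ∧
    (∀ f : ((selfBiMod A).iterDual k).X, δk A k (σk A k f) = 0) := by
  intro k
  induction k with
  | zero => exact ⟨fun c => rfl, fun f => rfl⟩
  | succ k ih =>
    constructor
    · intro c
      refine ContinuousLinearMap.ext fun g => ?_
      show c * δk A k (σk A k g) = (0 : ((selfBiMod A).iterDual k).X →L[ℂ] ℂ) g
      rw [ih.2 g, mul_zero, ContinuousLinearMap.zero_apply]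
    · intro f
      show f (ρk A k (ck A k 1)) = 0
      rw [ih.1 1]
      exact map_zero (show ((selfBiMod A).iterDual k).X →L[ℂ] ℂ from f)

end Aux

set_option linter.unusedSectionVars false
section Aux2
variable (A : Type) [NonUnitalRing A] [Module ℂ A] [SMulCommClass ℂ A A] [IsScalarTower ℂ A A]
  [TopologicalSpace A] [IsTopologicalAddGroup A] [ContinuousSMul ℂ A] [ContinuousMul A]

local notation "𝕌" => Unitization ℂ A

lemma inrCLM_eq (a : A) : inrCLM A a = (a : 𝕌) := rfl

lemma inrCLM_mul (a b : A) : inrCLM A a * inrCLM A b = inrCLM A (a * b) :=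
  (Unitization.inr_mul ℂ a b).symm

/-- canonical embedding of `A` into `A^(2m)` -/
def jj (m : ℕ) (a : A) : ((selfBiMod A).iterDual (2*m)).X :=
  (selfBiMod A).iterEmbed (show ContinuousSMul ℂ (selfBiMod A).X from
    inferInstanceAs (ContinuousSMul ℂ A)) m a

/-- `x ↦ (evaluation at x)`, two levels up -/
def jjSucc (k : ℕ) (j : A → ((selfBiMod A).iterDual k).X) (a : A) :
    ((selfBiMod A).iterDual (k+1+1)).X :=
  haveI := (selfBiMod A).iterCSM (inferInstanceAs (ContinuousSMul ℂ A)) k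
  show (((selfBiMod A).iterDual k).X →L[ℂ] ℂ) →L[ℂ] ℂ from
    evalAt (X := ((selfBiMod A).iterDual k).X) (j a)

lemma lB_zero : ∀ (k : ℕ) (x : ((selfBiMod 𝕌).iterDual k).X),
    ((selfBiMod 𝕌).iterDual k).l 0 x = 0 ∧ ((selfBiMod 𝕌).iterDual k).r 0 x = 0 := by
  intro k
  induction k with
  | zero =>
    intro x
    exact ⟨show (0 : 𝕌) * (show 𝕌 from x) = 0 from zero_mul _,
           show (show 𝕌 from x) * (0 : 𝕌) = 0 from mul_zero _⟩
  | succ k ih =>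
    intro F
    constructor
    · refine ContinuousLinearMap.ext fun y => ?_
      show (selfBiMod 𝕌).pairApply k F (((selfBiMod 𝕌).iterDual k).r 0 y) = 0
      rw [(ih y).2]
      simp [pA_add, pA_smul, pA_zero]
    · refine ContinuousLinearMap.ext fun y => ?_
      show (selfBiMod 𝕌).pairApply k F (((selfBiMod 𝕌).iterDual k).l 0 y) = 0
      rw [(ih y).1]
      simp [pA_add, pA_smul, pA_zero]

lemma lB_decomp : ∀ (k : ℕ) (u : 𝕌) (x : ((selfBiMod 𝕌).iterDual k).X),
    ((selfBiMod 𝕌).iterDual k).l u x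
      = u.fst • x + ((selfBiMod 𝕌).iterDual k).l (inrCLM A u.snd) x ∧
    ((selfBiMod 𝕌).iterDual k).r u x
      = u.fst • x + ((selfBiMod 𝕌).iterDual k).r (inrCLM A u.snd) x := by
  intro k
  induction k with
  | zero =>
    intro u (y : 𝕌)
    constructor
    · show u * (show 𝕌 from y) = u.fst • (show 𝕌 from y) + (u.snd : 𝕌) * (show 𝕌 from y)
      refine Unitization.ext ?_ ?_ <;>
        simp [Unitization.fst_mul, Unitization.snd_mul, Unitization.fst_smul,
          Unitization.snd_smul, Unitization.fst_add, Unitization.snd_add,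
          Unitization.fst_inr, Unitization.snd_inr] <;> abel
    · show (show 𝕌 from y) * u = u.fst • (show 𝕌 from y) + (show 𝕌 from y) * (u.snd : 𝕌)
      refine Unitization.ext ?_ ?_ <;>
        simp [Unitization.fst_mul, Unitization.snd_mul, Unitization.fst_smul,
          Unitization.snd_smul, Unitization.fst_add, Unitization.snd_add,
          Unitization.fst_inr, Unitization.snd_inr, mul_comm] <;> abel
  | succ k ih =>
    intro u F
    constructor
    · refine ContinuousLinearMap.ext fun y => ?_
      show (selfBiMod 𝕌).pairApply k F (((selfBiMod 𝕌).iterDual k).r u y)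
        = u.fst • (selfBiMod 𝕌).pairApply k F y
          + (selfBiMod 𝕌).pairApply k F (((selfBiMod 𝕌).iterDual k).r (inrCLM A u.snd) y)
      rw [(ih u y).2]
      simp [pA_add, pA_smul, pA_zero]
    · refine ContinuousLinearMap.ext fun y => ?_
      show (selfBiMod 𝕌).pairApply k F (((selfBiMod 𝕌).iterDual k).l u y)
        = u.fst • (selfBiMod 𝕌).pairApply k F y
          + (selfBiMod 𝕌).pairApply k F (((selfBiMod 𝕌).iterDual k).l (inrCLM A u.snd) y)
      rw [(ih u y).1]
      simp [pA_add, pA_smul, pA_zero]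

lemma jj_act : ∀ (m : ℕ) (a b : A),
    ((selfBiMod A).iterDual (2*m)).r b (jj A m a) = jj A m (a*b) ∧
    ((selfBiMod A).iterDual (2*m)).l b (jj A m a) = jj A m (b*a) := by
  intro m
  induction m with
  | zero => exact fun a b => ⟨rfl, rfl⟩
  | succ m ih =>
    intro a b
    constructor
    · refine ContinuousLinearMap.ext fun g => ?_
      show (selfBiMod A).pairApply (2*m) g (((selfBiMod A).iterDual (2*m)).r b (jj A m a))
        = (selfBiMod A).pairApply (2*m) g (jj A m (a*b))
      exact congrArg _ ((ih a b).1)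
    · refine ContinuousLinearMap.ext fun g => ?_
      show (selfBiMod A).pairApply (2*m) g (((selfBiMod A).iterDual (2*m)).l b (jj A m a))
        = (selfBiMod A).pairApply (2*m) g (jj A m (b*a))
      exact congrArg _ ((ih a b).2)

end Aux2

set_option linter.unnecessarySeqFocus false
section Aux3
variable (A : Type) [NonUnitalRing A] [Module ℂ A] [SMulCommClass ℂ A A] [IsScalarTower ℂ A A]
  [TopologicalSpace A] [IsTopologicalAddGroup A] [ContinuousSMul ℂ A] [ContinuousMul A]

local notation "𝕌" => Unitization ℂ A

/-- even-level compatibility package -/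
def Pst (k : ℕ) (j : A → ((selfBiMod A).iterDual k).X) : Prop :=
  (∀ (a : A) (f : ((selfBiMod A).iterDual k).X),
      σk A k (((selfBiMod A).iterDual k).l a f)
        = ((selfBiMod 𝕌).iterDual k).l (inrCLM A a) (σk A k f)) ∧
  (∀ (a : A) (f : ((selfBiMod A).iterDual k).X),
      σk A k (((selfBiMod A).iterDual k).r a f)
        = ((selfBiMod 𝕌).iterDual k).r (inrCLM A a) (σk A k f)) ∧
  (∀ (a : A) (x : ((selfBiMod 𝕌).iterDual k).X),
      δk A k (((selfBiMod 𝕌).iterDual k).l (inrCLM A a) x) = 0) ∧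
  (∀ (a : A) (x : ((selfBiMod 𝕌).iterDual k).X),
      δk A k (((selfBiMod 𝕌).iterDual k).r (inrCLM A a) x) = 0) ∧
  (∀ (a : A) (x : ((selfBiMod 𝕌).iterDual k).X),
      ρk A k (((selfBiMod 𝕌).iterDual k).l (inrCLM A a) x)
        = ((selfBiMod A).iterDual k).l a (ρk A k x) + δk A k x • j a) ∧
  (∀ (a : A) (x : ((selfBiMod 𝕌).iterDual k).X),
      ρk A k (((selfBiMod 𝕌).iterDual k).r (inrCLM A a) x)
        = ((selfBiMod A).iterDual k).r a (ρk A k x) + δk A k x • j a) ∧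
  (∀ (a : A) (c : ℂ),
      ((selfBiMod 𝕌).iterDual k).l (inrCLM A a) (ck A k c) = σk A k (c • j a)) ∧
  (∀ (a : A) (c : ℂ),
      ((selfBiMod 𝕌).iterDual k).r (inrCLM A a) (ck A k c) = σk A k (c • j a))

/-- odd-level compatibility package (at level `k+1`) -/
def Qst (k : ℕ) (j : A → ((selfBiMod A).iterDual k).X) : Prop :=
  (∀ (a : A) (F : ((selfBiMod 𝕌).iterDual (k+1)).X),
      ρk A (k+1) (((selfBiMod 𝕌).iterDual (k+1)).l (inrCLM A a) F)
        = ((selfBiMod A).iterDual (k+1)).l a (ρk A (k+1) F)) ∧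
  (∀ (a : A) (F : ((selfBiMod 𝕌).iterDual (k+1)).X),
      ρk A (k+1) (((selfBiMod 𝕌).iterDual (k+1)).r (inrCLM A a) F)
        = ((selfBiMod A).iterDual (k+1)).r a (ρk A (k+1) F)) ∧
  (∀ (a : A) (c : ℂ),
      ((selfBiMod 𝕌).iterDual (k+1)).l (inrCLM A a) (ck A (k+1) c) = 0) ∧
  (∀ (a : A) (c : ℂ),
      ((selfBiMod 𝕌).iterDual (k+1)).r (inrCLM A a) (ck A (k+1) c) = 0) ∧
  (∀ (a : A) (f : ((selfBiMod A).iterDual (k+1)).X),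
      ((selfBiMod 𝕌).iterDual (k+1)).l (inrCLM A a) (σk A (k+1) f)
        = σk A (k+1) (((selfBiMod A).iterDual (k+1)).l a f)
          + ck A (k+1) ((selfBiMod A).pairApply k f (j a))) ∧
  (∀ (a : A) (f : ((selfBiMod A).iterDual (k+1)).X),
      ((selfBiMod 𝕌).iterDual (k+1)).r (inrCLM A a) (σk A (k+1) f)
        = σk A (k+1) (((selfBiMod A).iterDual (k+1)).r a f)
          + ck A (k+1) ((selfBiMod A).pairApply k f (j a))) ∧
  (∀ (a : A) (F : ((selfBiMod 𝕌).iterDual (k+1)).X),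
      δk A (k+1) (((selfBiMod 𝕌).iterDual (k+1)).l (inrCLM A a) F)
        = (selfBiMod A).pairApply k (ρk A (k+1) F) (j a)) ∧
  (∀ (a : A) (F : ((selfBiMod 𝕌).iterDual (k+1)).X),
      δk A (k+1) (((selfBiMod 𝕌).iterDual (k+1)).r (inrCLM A a) F)
        = (selfBiMod A).pairApply k (ρk A (k+1) F) (j a))

lemma pairB_add (k : ℕ) (x : ((selfBiMod 𝕌).iterDual (k+1)).X)
    (y z : ((selfBiMod 𝕌).iterDual k).X) :
    (selfBiMod 𝕌).pairApply k x (y + z)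
      = (selfBiMod 𝕌).pairApply k x y + (selfBiMod 𝕌).pairApply k x z := by
  simp [pA_add, pA_smul, pA_zero]

lemma pair_ck (k : ℕ) (x : ((selfBiMod 𝕌).iterDual (k+1)).X) (c : ℂ) :
    (selfBiMod 𝕌).pairApply k x (ck A k c)
      = c * (selfBiMod 𝕌).pairApply k x (ck A k 1) := by
  rw [show ck A k c = c • ck A k 1 by rw [← map_smul, smul_eq_mul, mul_one], pA_smul,
    smul_eq_mul]

lemma stepPQ (k : ℕ) (j : A → ((selfBiMod A).iterDual k).X) (hP : Pst A k j) : Qst A k j := by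
  obtain ⟨pe1l, pe1r, pe2l, pe2r, pe3l, pe3r, pe4l, pe4r⟩ := hP
  refine ⟨?_, ?_, ?_, ?_, ?_, ?_, ?_, ?_⟩
  · intro a F
    refine ContinuousLinearMap.ext fun g => ?_
    show (selfBiMod 𝕌).pairApply k F (((selfBiMod 𝕌).iterDual k).r (inrCLM A a) (σk A k g))
      = (selfBiMod 𝕌).pairApply k F (σk A k (((selfBiMod A).iterDual k).r a g))
    exact (congrArg _ (pe1r a g)).symm
  · intro a F
    refine ContinuousLinearMap.ext fun g => ?_
    show (selfBiMod 𝕌).pairApply k F (((selfBiMod 𝕌).iterDual k).l (inrCLM A a) (σk A k g))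
      = (selfBiMod 𝕌).pairApply k F (σk A k (((selfBiMod A).iterDual k).l a g))
    exact (congrArg _ (pe1l a g)).symm
  · intro a c
    refine ContinuousLinearMap.ext fun y => ?_
    show c * δk A k (((selfBiMod 𝕌).iterDual k).r (inrCLM A a) y) = 0
    rw [pe2r a y, mul_zero]
  · intro a c
    refine ContinuousLinearMap.ext fun y => ?_
    show c * δk A k (((selfBiMod 𝕌).iterDual k).l (inrCLM A a) y) = 0
    rw [pe2l a y, mul_zero]
  · intro a f
    refine ContinuousLinearMap.ext fun y => ?_
    show (selfBiMod A).pairApply k f (ρk A k (((selfBiMod 𝕌).iterDual k).r (inrCLM A a) y))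
      = (selfBiMod A).pairApply k f (((selfBiMod A).iterDual k).r a (ρk A k y))
        + (selfBiMod A).pairApply k f (j a) * δk A k y
    rw [pe3r a y]
    simp only [pA_add, pA_smul, smul_eq_mul]
    ring
  · intro a f
    refine ContinuousLinearMap.ext fun y => ?_
    show (selfBiMod A).pairApply k f (ρk A k (((selfBiMod 𝕌).iterDual k).l (inrCLM A a) y))
      = (selfBiMod A).pairApply k f (((selfBiMod A).iterDual k).l a (ρk A k y))
        + (selfBiMod A).pairApply k f (j a) * δk A k y
    rw [pe3l a y]
    simp only [pA_add, pA_smul, smul_eq_mul]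
    ring
  · intro a F
    show (selfBiMod 𝕌).pairApply k F
        (((selfBiMod 𝕌).iterDual k).r (inrCLM A a) (ck A k 1))
      = (selfBiMod 𝕌).pairApply k F (σk A k (j a))
    rw [pe4r a 1, one_smul]
  · intro a F
    show (selfBiMod 𝕌).pairApply k F
        (((selfBiMod 𝕌).iterDual k).l (inrCLM A a) (ck A k 1))
      = (selfBiMod 𝕌).pairApply k F (σk A k (j a))
    rw [pe4l a 1, one_smul]

lemma stepQP (k : ℕ) (j : A → ((selfBiMod A).iterDual k).X) (hQ : Qst A k j) :
    Pst A (k+1+1) (jjSucc A k j) := by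
  obtain ⟨qo1l, qo1r, qo2l, qo2r, qo3l, qo3r, qo4l, qo4r⟩ := hQ
  refine ⟨?_, ?_, ?_, ?_, ?_, ?_, ?_, ?_⟩
  · intro a f
    refine ContinuousLinearMap.ext fun x => ?_
    show (selfBiMod A).pairApply (k+1) f (((selfBiMod A).iterDual (k+1)).r a (ρk A (k+1) x))
      = (selfBiMod A).pairApply (k+1) f
          (ρk A (k+1) (((selfBiMod 𝕌).iterDual (k+1)).r (inrCLM A a) x))
    exact (congrArg _ (qo1r a x)).symm
  · intro a f
    refine ContinuousLinearMap.ext fun x => ?_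
    show (selfBiMod A).pairApply (k+1) f (((selfBiMod A).iterDual (k+1)).l a (ρk A (k+1) x))
      = (selfBiMod A).pairApply (k+1) f
          (ρk A (k+1) (((selfBiMod 𝕌).iterDual (k+1)).l (inrCLM A a) x))
    exact (congrArg _ (qo1l a x)).symm
  · intro a x
    show (selfBiMod 𝕌).pairApply (k+1) x
        (((selfBiMod 𝕌).iterDual (k+1)).r (inrCLM A a) (ck A (k+1) 1)) = 0
    rw [qo2r a 1]
    simp [pA_add, pA_smul, pA_zero]
  · intro a x
    show (selfBiMod 𝕌).pairApply (k+1) x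
        (((selfBiMod 𝕌).iterDual (k+1)).l (inrCLM A a) (ck A (k+1) 1)) = 0
    rw [qo2l a 1]
    simp [pA_add, pA_smul, pA_zero]
  · intro a x
    refine ContinuousLinearMap.ext fun g => ?_
    show (selfBiMod 𝕌).pairApply (k+1) x
        (((selfBiMod 𝕌).iterDual (k+1)).r (inrCLM A a) (σk A (k+1) g))
      = (selfBiMod 𝕌).pairApply (k+1) x (σk A (k+1) (((selfBiMod A).iterDual (k+1)).r a g))
        + (selfBiMod 𝕌).pairApply (k+1) x (ck A (k+1) 1) * (selfBiMod A).pairApply k g (j a)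
    rw [qo3r a g, pairB_add, pair_ck]
    ring
  · intro a x
    refine ContinuousLinearMap.ext fun g => ?_
    show (selfBiMod 𝕌).pairApply (k+1) x
        (((selfBiMod 𝕌).iterDual (k+1)).l (inrCLM A a) (σk A (k+1) g))
      = (selfBiMod 𝕌).pairApply (k+1) x (σk A (k+1) (((selfBiMod A).iterDual (k+1)).l a g))
        + (selfBiMod 𝕌).pairApply (k+1) x (ck A (k+1) 1) * (selfBiMod A).pairApply k g (j a)
    rw [qo3l a g, pairB_add, pair_ck]
    ring
  · intro a c
    refine ContinuousLinearMap.ext fun y => ?_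
    show c * δk A (k+1) (((selfBiMod 𝕌).iterDual (k+1)).r (inrCLM A a) y)
      = c * (selfBiMod A).pairApply k (ρk A (k+1) y) (j a)
    rw [qo4r a y]
  · intro a c
    refine ContinuousLinearMap.ext fun y => ?_
    show c * δk A (k+1) (((selfBiMod 𝕌).iterDual (k+1)).l (inrCLM A a) y)
      = c * (selfBiMod A).pairApply k (ρk A (k+1) y) (j a)
    rw [qo4l a y]

lemma Pst_zero : Pst A 0 (fun a => a) := by
  refine ⟨?_, ?_, ?_, ?_, ?_, ?_, ?_, ?_⟩
  · intro a f
    show ((a * (show A from f) : A) : 𝕌) = (a : 𝕌) * ((show A from f) : 𝕌)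
    exact Unitization.inr_mul ℂ a _
  · intro a f
    show (((show A from f) * a : A) : 𝕌) = ((show A from f) : 𝕌) * (a : 𝕌)
    exact Unitization.inr_mul ℂ _ a
  · intro a (x : 𝕌)
    show ((a : 𝕌) * (show 𝕌 from x)).fst = 0
    simp [Unitization.fst_mul]
  · intro a (x : 𝕌)
    show ((show 𝕌 from x) * (a : 𝕌)).fst = 0
    simp [Unitization.fst_mul]
  · intro a (x : 𝕌)
    show ((a : 𝕌) * (show 𝕌 from x)).snd
      = a * (show 𝕌 from x).snd + (show 𝕌 from x).fst • a
    simp [Unitization.snd_mul]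
    abel
  · intro a (x : 𝕌)
    show ((show 𝕌 from x) * (a : 𝕌)).snd
      = (show 𝕌 from x).snd * a + (show 𝕌 from x).fst • a
    simp [Unitization.snd_mul]
    abel
  · intro a c
    show (a : 𝕌) * Unitization.inl c = ((c • a : A) : 𝕌)
    refine Unitization.ext ?_ ?_ <;> simp [Unitization.fst_mul, Unitization.snd_mul]
  · intro a c
    show Unitization.inl c * (a : 𝕌) = ((c • a : A) : 𝕌)
    refine Unitization.ext ?_ ?_ <;> simp [Unitization.fst_mul, Unitization.snd_mul]

lemma PQmain : ∀ m : ℕ, Pst A (2*m) (jj A m) ∧ Qst A (2*m) (jj A m) := by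
  intro m
  induction m with
  | zero =>
    have h0 : Pst A 0 (jj A 0) := Pst_zero A
    exact ⟨h0, stepPQ A 0 _ h0⟩
  | succ m ih =>
    have hP : Pst A (2*m+1+1) (jjSucc A (2*m) (jj A m)) := stepQP A (2*m) (jj A m) ih.2
    have hP' : Pst A (2*(m+1)) (jj A (m+1)) := hP
    exact ⟨hP', stepPQ A _ _ hP'⟩

end Aux3

section Aux4
variable (A : Type) [NonUnitalRing A] [Module ℂ A] [SMulCommClass ℂ A A] [IsScalarTower ℂ A A]
  [TopologicalSpace A] [IsTopologicalAddGroup A] [ContinuousSMul ℂ A] [ContinuousMul A]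

local notation "𝕌" => Unitization ℂ A

lemma T_vanish (hEss : IsEssential A) (n : ℕ)
    (D : A →L[ℂ] ((selfBiMod A).iterDual (2*n+1)).X) (T : A →L[ℂ] ℂ)
    (hT : PairCondition A n D T)
    (hInn : IsInnerDerivation A ((selfBiMod A).iterDual (2*n+1)) D) : T = 0 := by
  obtain ⟨x, hx⟩ := hInn
  have key : ∀ a b : A, T (a * b) = 0 := by
    intro a b
    rw [hT a b, hx a, hx b]
    show (selfBiMod A).pairApply (2*n)
        (((selfBiMod A).iterDual (2*n+1)).l b x - ((selfBiMod A).iterDual (2*n+1)).r b x)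
        (jj A n a)
      + (selfBiMod A).pairApply (2*n)
        (((selfBiMod A).iterDual (2*n+1)).l a x - ((selfBiMod A).iterDual (2*n+1)).r a x)
        (jj A n b) = 0
    have e1 : (selfBiMod A).pairApply (2*n)
        (((selfBiMod A).iterDual (2*n+1)).l b x - ((selfBiMod A).iterDual (2*n+1)).r b x)
        (jj A n a)
        = (selfBiMod A).pairApply (2*n) x (jj A n (a*b))
          - (selfBiMod A).pairApply (2*n) x (jj A n (b*a)) := by
      show (selfBiMod A).pairApply (2*n) x (((selfBiMod A).iterDual (2*n)).r b (jj A n a))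
          - (selfBiMod A).pairApply (2*n) x (((selfBiMod A).iterDual (2*n)).l b (jj A n a))
          = _
      rw [(jj_act A n a b).1, (jj_act A n a b).2]
    have e2 : (selfBiMod A).pairApply (2*n)
        (((selfBiMod A).iterDual (2*n+1)).l a x - ((selfBiMod A).iterDual (2*n+1)).r a x)
        (jj A n b)
        = (selfBiMod A).pairApply (2*n) x (jj A n (b*a))
          - (selfBiMod A).pairApply (2*n) x (jj A n (a*b)) := by
      show (selfBiMod A).pairApply (2*n) x (((selfBiMod A).iterDual (2*n)).r a (jj A n b))
          - (selfBiMod A).pairApply (2*n) x (((selfBiMod A).iterDual (2*n)).l a (jj A n b))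
          = _
      rw [(jj_act A n b a).1, (jj_act A n b a).2]
    rw [e1, e2]
    ring
  have hsub : ((Submodule.span ℂ {x : A | ∃ a b : A, x = a * b} : Submodule ℂ A) : Set A)
      ⊆ {z : A | T z = 0} := by
    intro z hz
    induction hz using Submodule.span_induction with
    | mem y hy => obtain ⟨a, b, rfl⟩ := hy; exact key a b
    | zero => simp
    | add u v hu hv hpu hpv =>
      show T (u + v) = 0
      rw [map_add, hpu, hpv, add_zero]
    | smul c u hu hpu =>
      show T (c • u) = 0
      rw [map_smul, hpu, smul_zero]
  have hclosed : IsClosed {z : A | T z = 0} := isClosed_eq T.continuous continuous_const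
  refine ContinuousLinearMap.ext fun z => ?_
  have hz : z ∈ closure ((Submodule.span ℂ {x : A | ∃ a b : A, x = a * b} : Submodule ℂ A)
      : Set A) := by
    rw [hEss.closure_eq]; trivial
  have := closure_minimal hsub hclosed hz
  simpa using this

def iterTAG' {A' : Type} (M : BiMod A') (h : IsTopologicalAddGroup M.X) :
    ∀ k, IsTopologicalAddGroup (M.iterDual k).X
  | 0 => h
  | k + 1 => inferInstanceAs (IsTopologicalAddGroup ((M.iterDual k).X →L[ℂ] ℂ))

def liftD (n : ℕ) (D : A →L[ℂ] ((selfBiMod A).iterDual (2*n+1)).X) (T : A →L[ℂ] ℂ) :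
    𝕌 →L[ℂ] ((selfBiMod 𝕌).iterDual (2*n+1)).X :=
  haveI := iterTAG' (selfBiMod (Unitization ℂ A))
    (inferInstanceAs (IsTopologicalAddGroup (Unitization ℂ A))) (2*n+1)
  ((σk A (2*n+1)).comp D + (ck A (2*n+1)).comp T).comp (sndCLM A)

lemma liftD_apply (n : ℕ) (D : A →L[ℂ] ((selfBiMod A).iterDual (2*n+1)).X) (T : A →L[ℂ] ℂ)
    (u : 𝕌) :
    liftD A n D T u = σk A (2*n+1) (D u.snd) + ck A (2*n+1) (T u.snd) := rfl

lemma inrCLM_snd (a : A) : (inrCLM A a).snd = a := rfl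
lemma inrCLM_fst (a : A) : (inrCLM A a).fst = 0 := rfl

lemma liftD_deriv (n : ℕ) (D : A →L[ℂ] ((selfBiMod A).iterDual (2*n+1)).X) (T : A →L[ℂ] ℂ)
    (hD : IsContDerivation A ((selfBiMod A).iterDual (2*n+1)) D)
    (hT : PairCondition A n D T) :
    IsContDerivation 𝕌 ((selfBiMod 𝕌).iterDual (2*n+1)) (liftD A n D T) := by
  obtain ⟨q1l, q1r, q2l, q2r, q3l, q3r, q4l, q4r⟩ := (PQmain A n).2
  have hT' : ∀ a b : A, T (a * b) =
      (selfBiMod A).pairApply (2*n) (D b) (jj A n a)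
      + (selfBiMod A).pairApply (2*n) (D a) (jj A n b) := hT
  intro u v
  rw [liftD_apply, liftD_apply, liftD_apply]
  rw [(lB_decomp A (2*n+1) u _).1, (lB_decomp A (2*n+1) v _).2]
  rw [map_add (((selfBiMod 𝕌).iterDual (2*n+1)).l (inrCLM A u.snd)),
    map_add (((selfBiMod 𝕌).iterDual (2*n+1)).r (inrCLM A v.snd))]
  rw [q3l u.snd (D v.snd), q2l u.snd (T v.snd), q3r v.snd (D u.snd), q2r v.snd (T u.snd)]
  rw [Unitization.snd_mul]
  simp only [map_add, map_smul]
  rw [hD u.snd v.snd, hT' u.snd v.snd]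
  simp only [map_add, map_smul, smul_add, add_zero]
  abel

lemma forwardDir (n : ℕ) (hWA : NWeaklyAmenable 𝕌 (2*n+1))
    (D : A →L[ℂ] ((selfBiMod A).iterDual (2*n+1)).X)
    (hD : IsContDerivation A ((selfBiMod A).iterDual (2*n+1)) D)
    (T : A →L[ℂ] ℂ) (hT : PairCondition A n D T) :
    IsInnerDerivation A ((selfBiMod A).iterDual (2*n+1)) D := by
  obtain ⟨q1l, q1r, q2l, q2r, q3l, q3r, q4l, q4r⟩ := (PQmain A n).2
  obtain ⟨Ξ, hΞ⟩ := hWA (liftD A n D T) (liftD_deriv A n D T hD hT)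
  refine ⟨ρk A (2*n+1) Ξ, fun a => ?_⟩
  have h1 := congrArg (ρk A (2*n+1)) (hΞ (inrCLM A a))
  rw [map_sub, q1l, q1r, liftD_apply, map_add, rho_sigma,
    (rho_c_delta_sigma A (2*n+1)).1, add_zero, inrCLM_snd] at h1
  exact h1

end Aux4

section Aux5
variable (A : Type) [NonUnitalRing A] [Module ℂ A] [SMulCommClass ℂ A A] [IsScalarTower ℂ A A]
  [TopologicalSpace A] [IsTopologicalAddGroup A] [ContinuousSMul ℂ A] [ContinuousMul A]

local notation "𝕌" => Unitization ℂ A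

lemma backwardDir (hEss : IsEssential A) (n : ℕ)
    (hcond : ∀ D : A →L[ℂ] ((selfBiMod A).iterDual (2 * n + 1)).X,
        IsContDerivation A ((selfBiMod A).iterDual (2 * n + 1)) D →
        (∃ T : A →L[ℂ] ℂ, PairCondition A n D T) →
        IsInnerDerivation A ((selfBiMod A).iterDual (2 * n + 1)) D) :
    NWeaklyAmenable 𝕌 (2*n+1) := by
  obtain ⟨q1l, q1r, q2l, q2r, q3l, q3r, q4l, q4r⟩ := (PQmain A n).2
  intro DB hDB
  -- DB kills the identity
  have hDB1 : DB 1 = 0 := by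
    have h := hDB 1 1
    rw [mul_one] at h
    rw [(lB_decomp A (2*n+1) 1 (DB 1)).1, (lB_decomp A (2*n+1) 1 (DB 1)).2] at h
    rw [Unitization.fst_one, Unitization.snd_one, one_smul] at h
    rw [show inrCLM A (0 : A) = 0 from map_zero _] at h
    rw [(lB_zero A (2*n+1) (DB 1)).1, (lB_zero A (2*n+1) (DB 1)).2] at h
    simp only [add_zero] at h
    have h' : DB 1 = DB 1 + DB 1 := by first | exact h | exact h.symm
    exact left_eq_add.mp h'
  -- restricted derivation and pairing functional
  set D : A →L[ℂ] ((selfBiMod A).iterDual (2*n+1)).X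
    := (ρk A (2*n+1)).comp (DB.comp (inrCLM A)) with hD_def
  set T : A →L[ℂ] ℂ := (δk A (2*n+1)).comp (DB.comp (inrCLM A)) with hT_def
  have hDa : ∀ a : A, D a = ρk A (2*n+1) (DB (inrCLM A a)) := fun a => rfl
  have hTa : ∀ a : A, T a = δk A (2*n+1) (DB (inrCLM A a)) := fun a => rfl
  have hD : IsContDerivation A ((selfBiMod A).iterDual (2*n+1)) D := by
    intro a b
    rw [hDa, ← inrCLM_mul, hDB (inrCLM A a) (inrCLM A b), map_add, q1l, q1r]
    rfl
  have hT : PairCondition A n D T := by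
    intro a b
    show T (a * b)
      = (selfBiMod A).pairApply (2*n) (D b) (jj A n a)
      + (selfBiMod A).pairApply (2*n) (D a) (jj A n b)
    rw [hTa, ← inrCLM_mul, hDB (inrCLM A a) (inrCLM A b), map_add, q4l, q4r]
    rfl
  obtain ⟨x, hx⟩ := hcond D hD ⟨T, hT⟩
  have hT0 : T = 0 := T_vanish A hEss n D T hT ⟨x, hx⟩
  refine ⟨σk A (2*n+1) x, fun u => ?_⟩
  have hu : u = u.fst • 1 + inrCLM A u.snd := by
    refine Unitization.ext ?_ ?_ <;>
      simp [inrCLM_fst, inrCLM_snd, Unitization.fst_add, Unitization.snd_add,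
        Unitization.fst_smul, Unitization.snd_smul, Unitization.fst_one, Unitization.snd_one]
  have hDBa : DB (inrCLM A u.snd)
      = σk A (2*n+1) (D u.snd) + ck A (2*n+1) (T u.snd) :=
    (split_decomp A (2*n+1) (DB (inrCLM A u.snd))).symm
  conv_lhs => rw [hu]
  rw [map_add, map_smul, hDB1, smul_zero, zero_add, hDBa, hT0]
  simp only [ContinuousLinearMap.zero_apply, map_zero, add_zero]
  rw [hx u.snd, map_sub]
  rw [(lB_decomp A (2*n+1) u (σk A (2*n+1) x)).1,
    (lB_decomp A (2*n+1) u (σk A (2*n+1) x)).2, q3l, q3r]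
  abel

end Aux5

/-- For a non-unital self-induced Fréchet algebra `A`, the unitization `A#` is
`(2n+1)`-weakly amenable iff every continuous derivation `D : A → A^(2n+1)` admitting
some `T ∈ A*` with `⟨ab, T⟩ = ⟨a, D b⟩ + ⟨b, D a⟩` is inner; and in that case every
such `T` must vanish. -/
theorem unitization_odd_weaklyAmenable_iff (A : Type) [NonUnitalRing A] [Module ℂ A] [SMulCommClass ℂ A A]
    [IsScalarTower ℂ A A] [UniformSpace A] [IsUniformAddGroup A] [ContinuousSMul ℂ A]
    [ContinuousMul A] [CompleteSpace A] [T2Space A] (hA : FrechetSeminorms A)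
    (hnu : ¬ HasIdentity A) (hself : SelfInduced A) (n : ℕ) :
    (NWeaklyAmenable (Unitization ℂ A) (2 * n + 1) ↔
      ∀ D : A →L[ℂ] ((selfBiMod A).iterDual (2 * n + 1)).X,
        IsContDerivation A ((selfBiMod A).iterDual (2 * n + 1)) D →
        (∃ T : A →L[ℂ] ℂ, PairCondition A n D T) →
        IsInnerDerivation A ((selfBiMod A).iterDual (2 * n + 1)) D) ∧
    (NWeaklyAmenable (Unitization ℂ A) (2 * n + 1) →
      ∀ (D : A →L[ℂ] ((selfBiMod A).iterDual (2 * n + 1)).X) (T : A →L[ℂ] ℂ),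
        IsContDerivation A ((selfBiMod A).iterDual (2 * n + 1)) D →
        PairCondition A n D T → T = 0) := by
  constructor
  · constructor
    · rintro hWA D hD ⟨T, hT⟩
      exact forwardDir A n hWA D hD T hT
    · intro hcond
      exact backwardDir A hself.1 n hcond
  · intro hWA D T hD hT
    exact T_vanish A hself.1 n D T hT (forwardDir A n hWA D hD T hT)
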